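/- Let k' be a field with a non-Archimedean absolute value |·|_v whose valuation ring O = {x ∈ k' : |x|_v ≤ 1} is a Dedekind domain. Let (c_n)_{n ∈ ℤ} be a sequence in k' satisfying a linear recurrence c_n = r_1 c_{n−1} + ⋯ + r_M c_{n−M} of minimal order M with r_i ∈ k' and r_M ≠ 0. If |c_n|_v ≤ 1 for every n ≥ n_0, then |r_i|_v ≤ 1 for all i = 1, …, M. -/
import Mathlib

noncomputable def fatouG {k' : Type*} [Field k'] (M : ℕ) (r : ℕ → k') : ℕ → k'
  | 0 => 1
  | (n+1) => ∑ i ∈ Finset.range M, if i ≤ n then r (i+1) * fatouG M r (n - i) else 0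
  decreasing_by omega

lemma nonarch_sum_le {k' : Type*} [Field k'] (v : AbsoluteValue k' ℝ)
    (hna : IsNonarchimedean v) {α : Type*} (s : Finset α) (f : α → k') {B : ℝ}
    (hB : 0 ≤ B) (h : ∀ x ∈ s, v (f x) ≤ B) : v (∑ x ∈ s, f x) ≤ B := by
  induction s using Finset.cons_induction with
  | empty => simpa using hB
  | cons a s ha ih =>
    rw [Finset.sum_cons]
    exact le_trans (hna _ _) (max_le (h a (by simp)) (ih fun x hx => h x (by simp [hx])))

lemma nonarch_sum_lt {k' : Type*} [Field k'] (v : AbsoluteValue k' ℝ)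
    (hna : IsNonarchimedean v) {α : Type*} (s : Finset α) (f : α → k') {B : ℝ}
    (hB : 0 < B) (h : ∀ x ∈ s, v (f x) < B) : v (∑ x ∈ s, f x) < B := by
  induction s using Finset.cons_induction with
  | empty => simpa using hB
  | cons a s ha ih =>
    rw [Finset.sum_cons]
    exact lt_of_le_of_lt (hna _ _) (max_lt (h a (by simp)) (ih fun x hx => h x (by simp [hx])))

theorem recurrence_coeffs_in_valuation_ring
    (k' : Type*) [Field k'] (v : AbsoluteValue k' ℝ)
    (hna : IsNonarchimedean v)
    (O : Subring k') (hO : ∀ x : k', x ∈ O ↔ v x ≤ 1)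
    (hDed : IsDedekindDomain O)
    (M : ℕ) (hM : 0 < M) (r : ℕ → k') (hrM : r M ≠ 0)
    (c : ℤ → k')
    (hrec : ∀ n : ℤ, c n = ∑ i ∈ Finset.range M, r (i + 1) * c (n - (i + 1)))
    (hmin : ∀ n : ℤ, (Matrix.of fun i j : Fin M => c (n + i + j)).det ≠ 0)
    (n₀ : ℤ) (hc : ∀ n : ℤ, n₀ ≤ n → v (c n) ≤ 1) :
    ∀ i ∈ Finset.Icc 1 M, v (r i) ≤ 1 := by
  by_contra hcon
  push_neg at hcon
  obtain ⟨i₁, hi₁mem, hi₁⟩ := hcon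
  have g0 : fatouG M r 0 = (1 : k') := by rw [fatouG]
  have gdef : ∀ m : ℕ, fatouG M r (m+1)
      = ∑ i ∈ Finset.range M, if i ≤ m then r (i+1) * fatouG M r (m - i) else 0 := by
    intro m; rw [fatouG]
  -- Part 1 : boundedness of fatouG
  set H : Matrix (Fin M) (Fin M) k' := Matrix.of fun i j : Fin M => c (n₀ + i + j) with hH
  have hHdet : IsUnit H.det := isUnit_iff_ne_zero.mpr (hmin n₀)
  set lam : Fin M → k' := H⁻¹.mulVec (fun i : Fin M => fatouG M r i) with hlamdef
  have hlam : ∀ i : Fin M, ∑ j, H i j * lam j = fatouG M r i := by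
    intro i
    have h1 : H.mulVec lam = fun i : Fin M => fatouG M r i := by
      rw [hlamdef, Matrix.mulVec_mulVec, Matrix.mul_nonsing_inv H hHdet, Matrix.one_mulVec]
    have := congrFun h1 i
    simpa [Matrix.mulVec, dotProduct] using this
  have key : ∀ n : ℕ, fatouG M r n = ∑ j : Fin M, lam j * c (n₀ + n + j) := by
    intro n
    induction n using Nat.strong_induction_on with
    | _ n ih =>
      by_cases hn : n < M
      · rw [← hlam ⟨n, hn⟩]
        refine Finset.sum_congr rfl fun j _ => ?_
        rw [mul_comm]
        simp [hH]
      · push_neg at hn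
        obtain ⟨m, rfl⟩ : ∃ m, n = m + 1 := ⟨n - 1, by omega⟩
        rw [gdef m]
        have step1 : ∀ i ∈ Finset.range M,
            (if i ≤ m then r (i+1) * fatouG M r (m - i) else 0)
            = ∑ j : Fin M, lam j * (r (i+1) * c (n₀ + (↑(m+1) : ℤ) + ↑j - (↑i+1))) := by
          intro i hi
          have him : i < M := Finset.mem_range.mp hi
          rw [if_pos (by omega), ih (m - i) (by omega), Finset.mul_sum]
          refine Finset.sum_congr rfl fun j _ => ?_
          have harg : (n₀ + (↑(m - i) : ℤ) + ↑j) = n₀ + (↑(m+1) : ℤ) + ↑j - (↑i+1) := by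
            omega
          rw [harg]; ring
        rw [Finset.sum_congr rfl step1, Finset.sum_comm]
        refine Finset.sum_congr rfl fun j _ => ?_
        rw [← Finset.mul_sum, ← hrec (n₀ + (↑(m+1) : ℤ) + ↑j)]
  set C : ℝ := ∑ j : Fin M, v (lam j) with hC
  have hgbound : ∀ n : ℕ, v (fatouG M r n) ≤ C := by
    intro n
    rw [key n]
    refine le_trans (v.sum_le _ _) (Finset.sum_le_sum fun j _ => ?_)
    rw [v.map_mul]
    refine mul_le_of_le_one_right (v.nonneg _) (hc _ ?_)
    have : (0:ℤ) ≤ (j : ℤ) := by positivity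
    omega
  -- Part 2 : slope argument
  have hIne : (Finset.Icc 1 M).Nonempty := ⟨1, Finset.mem_Icc.mpr ⟨le_refl 1, hM⟩⟩
  set ρ : ℝ := (Finset.Icc 1 M).sup' hIne (fun i => v (r i) ^ ((i:ℝ)⁻¹)) with hρdef
  have hpow : ∀ i ∈ Finset.Icc 1 M, (v (r i) ^ ((i:ℝ)⁻¹)) ^ (i:ℕ) = v (r i) := by
    intro i hi
    have hi1 : 1 ≤ i := (Finset.mem_Icc.mp hi).1
    have hine : (i:ℝ) ≠ 0 := by
      have : (1:ℝ) ≤ (i:ℝ) := by exact_mod_cast hi1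
      linarith
    rw [← Real.rpow_natCast (v (r i) ^ ((i:ℝ)⁻¹)) i, ← Real.rpow_mul (v.nonneg _),
       inv_mul_cancel₀ hine, Real.rpow_one]
  have hrρ : ∀ i ∈ Finset.Icc 1 M, v (r i) ≤ ρ ^ i := by
    intro i hi
    rw [← hpow i hi, hρdef]
    exact pow_le_pow_left₀ (Real.rpow_nonneg (v.nonneg _) _)
      (Finset.le_sup' (fun i => v (r i) ^ ((i:ℝ)⁻¹)) hi) i
  have hρ1 : 1 < ρ := by
    rw [hρdef]
    refine lt_of_lt_of_le ?_ (Finset.le_sup' (fun i => v (r i) ^ ((i:ℝ)⁻¹)) hi₁mem)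
    rw [Real.one_lt_rpow_iff (v.nonneg _)]
    have hi1pos : (0:ℝ) < (i₁:ℝ)⁻¹ := by
      have h1 : 1 ≤ i₁ := (Finset.mem_Icc.mp hi₁mem).1
      have : (0:ℝ) < (i₁:ℝ) := by exact_mod_cast Nat.lt_of_lt_of_le Nat.zero_lt_one h1
      positivity
    exact Or.inl ⟨hi₁, hi1pos⟩
  have hρ0 : (0:ℝ) < ρ := lt_trans one_pos hρ1
  have claimA : ∀ n : ℕ, v (fatouG M r n) ≤ ρ ^ n := by
    intro n
    induction n using Nat.strong_induction_on with
    | _ n ih =>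
      match n, ih with
      | 0, _ => simp [g0]
      | (m+1), ih =>
        rw [gdef m]
        refine nonarch_sum_le v hna _ _ (by positivity) ?_
        intro i hi
        by_cases hcond : i ≤ m
        · rw [if_pos hcond, v.map_mul]
          calc v (r (i+1)) * v (fatouG M r (m - i))
              ≤ ρ^(i+1) * ρ^(m-i) := by
                refine mul_le_mul (hrρ _ ?_) (ih (m-i) (by omega)) (v.nonneg _) (by positivity)
                exact Finset.mem_Icc.mpr ⟨by omega, Finset.mem_range.mp hi⟩
            _ = ρ^(m+1) := by rw [← pow_add]; congr 1; omega
        · rw [if_neg hcond]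
          simpa using le_of_lt (by positivity : (0:ℝ) < ρ^(m+1))
  obtain ⟨N, hN⟩ := pow_unbounded_of_one_lt (max C 1) hρ1
  have hNpos : 0 < N := by
    rcases Nat.eq_zero_or_pos N with h0 | h; swap; · exact h
    rw [h0, pow_zero] at hN
    exact absurd hN (not_lt.mpr (le_max_right _ _))
  set S : Finset ℕ := (Finset.range N).filter (fun n => v (fatouG M r n) = ρ ^ n) with hS
  have hSne : S.Nonempty := ⟨0, by simp [hS, hNpos, g0]⟩
  set N' : ℕ := S.max' hSne with hN'def
  have hN'mem : N' ∈ Finset.filter (fun n => v (fatouG M r n) = ρ ^ n) (Finset.range N) := S.max'_mem hSne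
  have hN'val : v (fatouG M r N') = ρ ^ N' := (Finset.mem_filter.mp hN'mem).2
  have hgt : ∀ m : ℕ, N' < m → v (fatouG M r m) < ρ ^ m := by
    intro m hm
    rcases lt_or_ge m N with h | h
    · refine lt_of_le_of_ne (claimA m) fun heq => ?_
      have : m ≤ N' := S.le_max' m (Finset.mem_filter.mpr ⟨Finset.mem_range.mpr h, heq⟩)
      omega
    · calc v (fatouG M r m) ≤ C := hgbound m
        _ ≤ max C 1 := le_max_left _ _
        _ < ρ ^ N := hN
        _ ≤ ρ ^ m := pow_le_pow_right₀ (le_of_lt hρ1) h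
  set T : Finset ℕ := (Finset.Icc 1 M).filter (fun i => v (r i) = ρ ^ i) with hT
  have hTne : T.Nonempty := by
    obtain ⟨i₀, hi₀mem, hi₀⟩ := Finset.exists_mem_eq_sup' hIne (fun i => v (r i) ^ ((i:ℝ)⁻¹))
    refine ⟨i₀, Finset.mem_filter.mpr ⟨hi₀mem, ?_⟩⟩
    have h2 := hpow i₀ hi₀mem
    rw [← hi₀] at h2
    exact h2.symm
  set D : ℕ := T.max' hTne with hDdef
  have hDmem : D ∈ Finset.filter (fun i => v (r i) = ρ ^ i) (Finset.Icc 1 M) := T.max'_mem hTne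
  have hD1 : 1 ≤ D := (Finset.mem_Icc.mp (Finset.mem_filter.mp hDmem).1).1
  have hDM : D ≤ M := (Finset.mem_Icc.mp (Finset.mem_filter.mp hDmem).1).2
  have hDval : v (r D) = ρ ^ D := (Finset.mem_filter.mp hDmem).2
  have hDgt : ∀ i ∈ Finset.Icc 1 M, D < i → v (r i) < ρ ^ i := by
    intro i hi hDi
    refine lt_of_le_of_ne (hrρ i hi) fun he => ?_
    have : i ≤ D := T.le_max' i (Finset.mem_filter.mpr ⟨hi, he⟩)
    omega
  -- the contradiction at index N' + D
  have hmainval : v (r D * fatouG M r N') = ρ ^ (N' + D) := by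
    rw [v.map_mul, hDval, hN'val, ← pow_add]
    congr 1; omega
  have heqn : r D * fatouG M r N'
      = fatouG M r (N' + D) - ∑ i ∈ (Finset.range M).erase (D-1),
          (if i ≤ N' + D - 1 then r (i+1) * fatouG M r (N' + D - 1 - i) else 0) := by
    have h1 : fatouG M r (N' + D)
        = ∑ i ∈ Finset.range M, (if i ≤ N' + D - 1 then r (i+1) * fatouG M r (N' + D - 1 - i) else 0) := by
      have he : N' + D = (N' + D - 1) + 1 := by omega
      conv_lhs => rw [he, gdef]
    have hDin : D - 1 ∈ Finset.range M := Finset.mem_range.mpr (by omega)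
    have h2 := Finset.add_sum_erase (Finset.range M)
      (fun i => if i ≤ N' + D - 1 then r (i+1) * fatouG M r (N' + D - 1 - i) else 0) hDin
    rw [h1, ← h2]
    beta_reduce
    have e1 : D - 1 + 1 = D := by omega
    have e2 : N' + D - 1 - (D - 1) = N' := by omega
    rw [if_pos (show D - 1 ≤ N' + D - 1 by omega), e1, e2]
    ring
  have hlt : v (r D * fatouG M r N') < ρ ^ (N' + D) := by
    rw [heqn, sub_eq_add_neg]
    refine lt_of_le_of_lt (hna _ _) (max_lt (hgt (N' + D) (by omega)) ?_)
    rw [v.map_neg]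
    refine nonarch_sum_lt v hna _ _ (by positivity) ?_
    intro i hi
    obtain ⟨hine, hirange⟩ := Finset.mem_erase.mp hi
    have hiM : i < M := Finset.mem_range.mp hirange
    by_cases hcond : i ≤ N' + D - 1
    · rw [if_pos hcond, v.map_mul]
      rcases lt_or_gt_of_ne (show i + 1 ≠ D by omega) with hlt' | hgt'
      · calc v (r (i+1)) * v (fatouG M r (N' + D - 1 - i))
            ≤ ρ^(i+1) * v (fatouG M r (N' + D - 1 - i)) := by
              refine mul_le_mul_of_nonneg_right (hrρ _ ?_) (v.nonneg _)
              exact Finset.mem_Icc.mpr ⟨by omega, by omega⟩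
          _ < ρ^(i+1) * ρ^(N' + D - 1 - i) := by
              refine mul_lt_mul_of_pos_left (hgt _ (by omega)) (by positivity)
          _ = ρ^(N' + D) := by rw [← pow_add]; congr 1; omega
      · calc v (r (i+1)) * v (fatouG M r (N' + D - 1 - i))
            ≤ v (r (i+1)) * ρ^(N' + D - 1 - i) :=
              mul_le_mul_of_nonneg_left (claimA _) (v.nonneg _)
          _ < ρ^(i+1) * ρ^(N' + D - 1 - i) := by
              refine mul_lt_mul_of_pos_right (hDgt (i+1) ?_ hgt') (by positivity)
              exact Finset.mem_Icc.mpr ⟨by omega, by omega⟩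
          _ = ρ^(N' + D) := by rw [← pow_add]; congr 1; omega
    · rw [if_neg hcond]
      simpa using (by positivity : (0:ℝ) < ρ^(N' + D))
  rw [hmainval] at hlt
  exact lt_irrefl _ hlt
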